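/- Let W1 and W2 be B-DMCs with finite output alphabets satisfying W_i(y|0)+W_i(y|1) > 0 for every output y, let ρ ≥ 0, and let z1, z2 ∈ [0,1] satisfy g(ρ,z1) = exp(−E0(ρ,W1)) and g(ρ,z2) = exp(−E0(ρ,W2)) (i.e. W1 and W2 have the same E0(ρ,·) values as binary symmetric channels with parameters z1 and z2). Then exp(−E0(ρ, W⁻)) ≥ g(ρ, z1·z2); equivalently E0(ρ, W⁻) ≤ −log g(ρ, z1 z2), the E0 value of the minus transform of the two matched binary symmetric channels. -/

import Mathlib

open Real

/-- Gallager's `g` function: `g ρ z = ((1/2)(1+z)^{1/(1+ρ)} + (1/2)(1-z)^{1/(1+ρ)})^{1+ρ}`. -/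
noncomputable def g (ρ z : ℝ) : ℝ :=
  ((1/2) * (1 + z) ^ (1/(1+ρ)) + (1/2) * (1 - z) ^ (1/(1+ρ))) ^ (1+ρ)

/-- Gallager's `E0` of a binary-input channel `W` (input `false` is 0, `true` is 1)
under the uniform input distribution. -/
noncomputable def E0 {Y : Type*} [Fintype Y] (ρ : ℝ) (W : Bool → Y → ℝ) : ℝ :=
  - Real.log (∑ y, ((1/2) * (W false y) ^ (1/(1+ρ)) + (1/2) * (W true y) ^ (1/(1+ρ))) ^ (1+ρ))

/-- `q_W(y) = (W(y|0)+W(y|1))/2`. -/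
noncomputable def qW {Y : Type*} (W : Bool → Y → ℝ) (y : Y) : ℝ :=
  (W false y + W true y) / 2

/-- `Δ_W(y) = (W(y|0) - W(y|1))/(W(y|0)+W(y|1))`. -/
noncomputable def ΔW {Y : Type*} (W : Bool → Y → ℝ) (y : Y) : ℝ :=
  (W false y - W true y) / (W false y + W true y)

/-- The minus polar transform of two channels. -/
noncomputable def Wminus {Y1 Y2 : Type*} (W1 : Bool → Y1 → ℝ) (W2 : Bool → Y2 → ℝ) :
    Bool → Y1 × Y2 → ℝ :=
  fun u1 y => ∑ u2 : Bool, (1/2) * W1 (xor u1 u2) y.1 * W2 u2 y.2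

/-- The plus polar transform of two channels; output is `(y1, y2, u1)`. -/
noncomputable def Wplus {Y1 Y2 : Type*} (W1 : Bool → Y1 → ℝ) (W2 : Bool → Y2 → ℝ) :
    Bool → Y1 × Y2 × Bool → ℝ :=
  fun u2 y => (1/2) * W1 (xor y.2.2 u2) y.1 * W2 u2 y.2.1

/-- The function `h(ρ, z1, z2)` from the `W⁺` representation. -/
noncomputable def hfun (ρ z1 z2 : ℝ) : ℝ :=
  (1/2) * (1 + z1*z2) * g ρ ((z1 + z2)/(1 + z1*z2))
    + (1/2) * (1 - z1*z2) * g ρ ((z1 - z2)/(1 - z1*z2))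


open Set

namespace PolarAux


/-- `sinh t ≥ t` in exponential form: `exp t ^2 - 2 t exp t - 1 ≥ 0`. -/
lemma exp_sq_ineq {t : ℝ} (ht : 0 ≤ t) : 2*t*exp t + 1 ≤ exp t * exp t := by
  have h := Real.self_le_sinh_iff.mpr ht
  rw [Real.sinh_eq] at h
  have hpos : (0:ℝ) < exp t := exp_pos t
  have hneg : exp (-t) = (exp t)⁻¹ := exp_neg t
  rw [hneg] at h
  have h2 : t * exp t ≤ (exp t - (exp t)⁻¹) / 2 * exp t :=
    mul_le_mul_of_nonneg_right h hpos.le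
  have h3 : (exp t)⁻¹ * exp t = 1 := inv_mul_cancel₀ hpos.ne'
  nlinarith [h2]

/-- `tanh t ≤ t` in exponential form. -/
lemma tanh_ineq {t : ℝ} (ht : 0 ≤ t) : exp t * exp t - 1 ≤ t * (exp t * exp t + 1) := by
  -- via sinh t ≤ t * cosh t
  have key : ∀ s : ℝ, 0 ≤ s → Real.sinh s ≤ s * Real.cosh s := by
    intro s hs
    have hmono : MonotoneOn (fun s : ℝ => s * Real.cosh s - Real.sinh s) (Ici 0) := by
      apply monotoneOn_of_deriv_nonneg (convex_Ici 0)
      · exact ((continuous_id.mul Real.continuous_cosh).sub Real.continuous_sinh).continuousOn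
      · intro x hx
        exact (((hasDerivAt_id x).mul (Real.hasDerivAt_cosh x)).sub
          (Real.hasDerivAt_sinh x)).differentiableAt.differentiableWithinAt
      · intro x hx
        rw [interior_Ici, mem_Ioi] at hx
        have hd : HasDerivAt (fun s : ℝ => s * Real.cosh s - Real.sinh s)
            (1 * Real.cosh x + x * Real.sinh x - Real.cosh x) x :=
          ((hasDerivAt_id x).mul (Real.hasDerivAt_cosh x)).sub (Real.hasDerivAt_sinh x)
        rw [hd.deriv]
        have : 0 ≤ x * Real.sinh x := mul_nonneg hx.le (Real.sinh_nonneg_iff.mpr hx.le)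
        linarith
    have h0 : (fun s : ℝ => s * Real.cosh s - Real.sinh s) 0 = 0 := by simp
    have := hmono (mem_Ici.mpr le_rfl) (mem_Ici.mpr hs) hs
    simp only [h0] at this
    linarith
  have h := key t ht
  rw [Real.sinh_eq, Real.cosh_eq] at h
  have hpos : (0:ℝ) < exp t := exp_pos t
  have hneg : exp (-t) = (exp t)⁻¹ := exp_neg t
  rw [hneg] at h
  have h2 : (exp t - (exp t)⁻¹)/2 * exp t ≤ t * ((exp t + (exp t)⁻¹)/2) * exp t :=
    mul_le_mul_of_nonneg_right h hpos.le
  have h3 : (exp t)⁻¹ * exp t = 1 := inv_mul_cancel₀ hpos.ne'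
  nlinarith [h2]

noncomputable def f1 (t : ℝ) : ℝ := t / (exp t - 1)
noncomputable def f2 (t : ℝ) : ℝ := t / (exp t + 1)
noncomputable def f1d (t : ℝ) : ℝ := (1 * (exp t - 1) - t * exp t) / (exp t - 1) ^ 2
noncomputable def f2d (t : ℝ) : ℝ := (1 * (exp t + 1) - t * exp t) / (exp t + 1) ^ 2

lemma exp_sub_one_pos {t : ℝ} (ht : 0 < t) : 0 < exp t - 1 := by
  have := Real.exp_lt_exp.mpr ht; simp only [Real.exp_zero] at this; linarith
  
lemma exp_add_one_pos (t : ℝ) : 0 < exp t + 1 := by positivity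

lemma hasDerivAt_f1 {t : ℝ} (ht : 0 < t) : HasDerivAt f1 (f1d t) t := by
  have hne : exp t - 1 ≠ 0 := (exp_sub_one_pos ht).ne'
  have h := (hasDerivAt_id t).fun_div ((Real.hasDerivAt_exp t).sub_const 1) hne
  exact h

lemma hasDerivAt_f2 (t : ℝ) : HasDerivAt f2 (f2d t) t := by
  have hne : exp t + 1 ≠ 0 := (exp_add_one_pos t).ne'
  have h := (hasDerivAt_id t).fun_div ((Real.hasDerivAt_exp t).add_const 1) hne
  exact h

lemma f1d_ge {t : ℝ} (ht : 0 < t) : -(1/2) ≤ f1d t := by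
  have hE := exp_sub_one_pos ht
  have key := exp_sq_ineq ht.le
  rw [f1d, le_div_iff₀ (by positivity)]
  nlinarith [key]

lemma f2d_le_half (t : ℝ) (ht : 0 ≤ t) : f2d t ≤ 1/2 := by
  have hE : (1:ℝ) ≤ exp t := by simpa using Real.exp_le_exp.mpr ht
  have h2 : (0:ℝ) < exp t + 1 := exp_add_one_pos t
  rw [f2d, div_le_iff₀ (by positivity)]
  nlinarith [mul_nonneg ht (exp_pos t).le]

lemma f2d_ge {t : ℝ} (ht : 0 ≤ t) : -(1/2) ≤ f2d t := by
  have h2 : (0:ℝ) < exp t + 1 := exp_add_one_pos t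
  have hsq : (1 + t/2)^2 ≤ exp t := by
    have h1' : 1 + t/2 ≤ exp (t/2) := by
      have := Real.add_one_le_exp (t/2); linarith
    have hnn : (0:ℝ) ≤ 1 + t/2 := by linarith
    calc (1 + t/2)^2 ≤ (exp (t/2))^2 := by nlinarith [h1']
    _ = exp t := by
        rw [sq, ← Real.exp_add]
        norm_num
  rw [f2d, le_div_iff₀ (by positivity)]
  nlinarith [hsq, sq_nonneg (1 - t/2)]




noncomputable def f2dd (t : ℝ) : ℝ :=
  ((0 * (exp t + 1) + 1 * exp t - (1 * exp t + t * exp t)) * (exp t + 1) ^ 2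
      - (1 * (exp t + 1) - t * exp t) * (2 * (exp t + 1) * exp t)) / ((exp t + 1) ^ 2) ^ 2

lemma hasDerivAt_f2d (t : ℝ) : HasDerivAt f2d (f2dd t) t := by
  have hE := Real.hasDerivAt_exp t
  have hnum : HasDerivAt (fun t : ℝ => 1 * (exp t + 1) - t * exp t)
      (0 * (exp t + 1) + 1 * exp t - (1 * exp t + t * exp t)) t :=
    ((hasDerivAt_const t (1:ℝ)).mul (hE.add_const 1)).sub ((hasDerivAt_id t).mul hE)
  have hden : HasDerivAt (fun t : ℝ => (exp t + 1) ^ 2) (2 * (exp t + 1) * exp t) t := by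
    have := (hE.add_const 1).fun_pow 2
    simpa [mul_comm, mul_assoc, mul_left_comm] using this
  have hne : ((exp t + 1) ^ 2) ≠ 0 := by positivity
  exact (hnum.div hden hne)

lemma f2dd_nonpos {t : ℝ} (ht0 : 0 ≤ t) (ht2 : t ≤ 2) : f2dd t ≤ 0 := by
  have hE : (1:ℝ) ≤ exp t := by simpa using Real.exp_le_exp.mpr ht0
  have h1 : (0:ℝ) < exp t + 1 := exp_add_one_pos t
  rw [f2dd, div_nonpos_iff]
  right
  constructor
  · have hfac : (0 * (exp t + 1) + 1 * exp t - (1 * exp t + t * exp t)) * (exp t + 1) ^ 2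
        - (1 * (exp t + 1) - t * exp t) * (2 * (exp t + 1) * exp t)
        = (exp t + 1) * exp t * (t * (exp t - 1) - 2 * (exp t + 1)) := by ring
    rw [hfac]
    apply mul_nonpos_of_nonneg_of_nonpos (by positivity)
    nlinarith [mul_nonneg (by linarith : (0:ℝ) ≤ 2 - t) (by linarith : (0:ℝ) ≤ exp t - 1)]
  · positivity

lemma f2d_antitoneOn : AntitoneOn f2d (Icc 0 2) := by
  apply antitoneOn_of_deriv_nonpos (convex_Icc 0 2)
  · exact fun x _ => ((hasDerivAt_f2d x).continuousAt).continuousWithinAt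
  · intro x hx
    exact (hasDerivAt_f2d x).differentiableAt.differentiableWithinAt
  · intro x hx
    rw [interior_Icc] at hx
    rw [(hasDerivAt_f2d x).deriv]
    exact f2dd_nonpos hx.1.le hx.2.le

lemma f2d_nonpos {t : ℝ} (ht : 2 ≤ t) : f2d t ≤ 0 := by
  have hE : (1:ℝ) ≤ exp t := by simpa using Real.exp_le_exp.mpr (by linarith : (0:ℝ) ≤ t)
  rw [f2d, div_nonpos_iff]
  right
  refine ⟨by nlinarith, by positivity⟩

-- the anchor: 1 + f2 y ≤ f1 y + y for y > 0
lemma anchor {y : ℝ} (hy : 0 < y) : 1 + y / (exp y + 1) ≤ y / (exp y - 1) + y := by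
  have h1 := exp_sub_one_pos hy
  have h2 := exp_add_one_pos y
  have key := tanh_ineq hy.le
  rw [← sub_nonneg]
  have heq : y / (exp y - 1) + y - (1 + y / (exp y + 1))
      = (y * (exp y * exp y + 1) - (exp y * exp y - 1)) / ((exp y - 1) * (exp y + 1)) := by
    field_simp
    ring
  rw [heq]
  apply div_nonneg (by linarith) (by positivity)




lemma anchor' {y : ℝ} (hy : 0 < y) : 1 + f2 y ≤ f1 y + y := anchor hy

lemma sub_two_f2_nonneg {t : ℝ} (ht : 0 ≤ t) : 0 ≤ t - 2 * f2 t := by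
  have h2 := exp_add_one_pos t
  have hE : (1:ℝ) ≤ exp t := by simpa using Real.exp_le_exp.mpr ht
  have h3 : 2 * f2 t ≤ t := by
    rw [f2, ← mul_div_assoc, div_le_iff₀ h2]
    nlinarith
  linarith

/-- The key scalar inequality (★5). -/
lemma star5 {x y : ℝ} (hx : 0 < x) (hy : 0 < y) :
    f1 x - f2 y ≤ f1 (x+y) + (x+y) - 2 * f2 (x+y) := by
  set Λ : ℝ → ℝ := fun s => f1 (x+s) + (x+s) - 2 * f2 (x+s) + f2 s - f1 x with hΛ
  have hder : ∀ s : ℝ, 0 < s →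
      HasDerivAt Λ (f1d (x+s) * 1 + 1 - 2 * (f2d (x+s) * 1) + f2d s) s := by
    intro s hs
    have hxs : 0 < x + s := by linarith
    have hg : HasDerivAt (fun s : ℝ => x + s) 1 s := (hasDerivAt_id s).const_add x
    have h1 : HasDerivAt (fun s : ℝ => f1 (x+s)) (f1d (x+s) * 1) s :=
      (hasDerivAt_f1 hxs).comp s hg
    have h2 : HasDerivAt (fun s : ℝ => f2 (x+s)) (f2d (x+s) * 1) s :=
      (hasDerivAt_f2 (x+s)).comp s hg
    have h3 : HasDerivAt (fun s : ℝ => x + s) 1 s := hg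
    have := ((h1.add h3).sub ((h2.const_mul 2))).add (hasDerivAt_f2 s)
    have h4 := this.sub_const (f1 x)
    exact h4
  have hmono : MonotoneOn Λ (Ici 0) := by
    apply monotoneOn_of_deriv_nonneg (convex_Ici 0)
    · -- continuity on Ici 0
      intro s hs
      rcases eq_or_lt_of_le (mem_Ici.mp hs) with h | h
      · -- s = 0 : continuity at 0 within Ici 0
        subst h
        have hxs : 0 < x + (0:ℝ) := by linarith
        have h1 : ContinuousAt (fun s : ℝ => f1 (x+s)) 0 :=
          ((hasDerivAt_f1 hxs).comp 0 ((hasDerivAt_id 0).const_add x)).continuousAt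
        have h2 : ContinuousAt (fun s : ℝ => f2 (x+s)) 0 :=
          ((hasDerivAt_f2 (x+0)).comp 0 ((hasDerivAt_id 0).const_add x)).continuousAt
        exact (((h1.add (continuousAt_const.add continuousAt_id)).sub
          ((h2.const_mul 2))).add (hasDerivAt_f2 0).continuousAt).sub
            continuousAt_const |>.continuousWithinAt
      · exact (hder s h).continuousAt.continuousWithinAt
    · intro s hs
      rw [interior_Ici, mem_Ioi] at hs
      exact (hder s hs).differentiableAt.differentiableWithinAt
    · intro s hs
      rw [interior_Ici, mem_Ioi] at hs
      rw [(hder s hs).deriv]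
      have hxs : 0 < x + s := by linarith
      rcases le_or_gt (x + s) 2 with hL | hL
      · -- small case : f2d s ≥ f2d (x+s), and f1d ≥ -1/2, f2d ≤ 1/2
        have hmono2 := f2d_antitoneOn (mem_Icc.mpr ⟨hs.le, by linarith⟩)
          (mem_Icc.mpr ⟨hxs.le, hL⟩) (by linarith)
        have := f1d_ge hxs
        have := f2d_le_half (x+s) hxs.le
        linarith
      · have := f1d_ge hxs
        have := f2d_nonpos hL.le
        have := f2d_ge hs.le
        linarith
  have h0 : Λ 0 = x - 2 * f2 x + f2 0 := by
    show f1 (x+0) + (x+0) - 2 * f2 (x+0) + f2 0 - f1 x = _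
    rw [add_zero]; ring
  have hf20 : f2 0 = 0 := by simp [f2]
  have hkey := hmono (mem_Ici.mpr le_rfl) (mem_Ici.mpr hy.le) hy.le
  rw [h0, hf20] at hkey
  have hanch := sub_two_f2_nonneg (by linarith : (0:ℝ) ≤ x)
  simp only [hΛ] at hkey
  linarith




/-- The inequality (★3), in `rpow` form. -/
lemma star3 {β τ : ℝ} (hβ0 : 0 < β) (hβ1 : β < 1) (hτ0 : 0 < τ) (hτ1 : τ < 1) :
    β * τ^β / (1 - τ^β) - (1-β) * τ^(1-β) / (1 + τ^(1-β))
      ≤ (2*(τ*τ) - τ + 1)/(1 - τ*τ) := by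
  set L : ℝ := -Real.log τ with hLdef
  have hL : 0 < L := by
    have := Real.log_neg hτ0 hτ1
    simp only [hLdef]; linarith
  have hτe : τ = exp (-L) := by
    simp only [hLdef, neg_neg]
    exact (Real.exp_log hτ0).symm
  set x : ℝ := β * L with hxdef
  set y : ℝ := (1-β) * L with hydef
  have hx : 0 < x := mul_pos hβ0 hL
  have hy : 0 < y := mul_pos (by linarith) hL
  have hxy : x + y = L := by simp only [hxdef, hydef]; ring
  have hu : τ ^ β = exp (-x) := by
    rw [Real.rpow_def_of_pos hτ0]
    congr 1
    simp only [hxdef, hLdef]; ring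
  have hv : τ ^ (1-β) = exp (-y) := by
    rw [Real.rpow_def_of_pos hτ0]
    congr 1
    simp only [hydef, hLdef]; ring
  have hEx : (0:ℝ) < exp x := exp_pos x
  have hEy : (0:ℝ) < exp y := exp_pos y
  have hEL : (0:ℝ) < exp L := exp_pos L
  have hExm : (0:ℝ) < exp x - 1 := exp_sub_one_pos hx
  have hEym : (0:ℝ) < exp y + 1 := by positivity
  have hELm : (0:ℝ) < exp L - 1 := exp_sub_one_pos hL
  have hExinv : exp (-x) = (exp x)⁻¹ := exp_neg x
  have hEyinv : exp (-y) = (exp y)⁻¹ := exp_neg y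
  have hELinv : exp (-L) = (exp L)⁻¹ := exp_neg L
  -- LHS pieces
  have e1 : β * τ^β / (1 - τ^β) = f1 x / L := by
    rw [hu, hExinv, f1]
    rw [div_eq_div_iff]
    · field_simp
      try rw [show β * (exp x * L) = x * exp x by rw [hxdef]; ring]
      try ring
      try (rw [hxdef]; ring)
    · have h1 : (exp x)⁻¹ < 1 := by
        rw [inv_lt_one_iff₀]; right; linarith
      have : (0:ℝ) < 1 - (exp x)⁻¹ := by linarith
      linarith
    · positivity
  have e2 : (1-β) * τ^(1-β) / (1 + τ^(1-β)) = f2 y / L := by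
    rw [hv, hEyinv, f2]
    rw [div_eq_div_iff]
    · field_simp
      try rw [show (1-β) * (exp y * L) = y * exp y by rw [hydef]; ring]
      try ring
      try (rw [hydef]; ring)
    · positivity
    · positivity
  have e3 : (2*(τ*τ) - τ + 1)/(1 - τ*τ) = (f1 L + L - 2 * f2 L) / L := by
    rw [hτe, hELinv, f1, f2]
    have hne : (exp L)⁻¹ * (exp L)⁻¹ < 1 := by
      have h1 : (exp L)⁻¹ < 1 := by rw [inv_lt_one_iff₀]; right; linarith
      have h0 : (0:ℝ) < (exp L)⁻¹ := by positivity
      nlinarith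
    rw [div_eq_div_iff (by linarith) (by positivity)]
    field_simp
    ring
  rw [e1, e2, e3, div_sub_div_same]
  have h5 := star5 hx hy
  rw [hxy] at h5
  exact div_le_div_of_nonneg_right h5 hL.le




noncomputable def hcl (β τ : ℝ) : ℝ :=
  β * (1-τ) * (1+τ)^2 / (2*τ*(1-τ^β)*(1+τ^(1-β)))

noncomputable def hclD (β τ : ℝ) : ℝ :=
  (β*(1+τ)*(1-3*τ) * (2*τ*(1-τ^β)*(1+τ^(1-β)))
    - β*(1-τ)*(1+τ)^2 * (2*(1-τ^β)*(1+τ^(1-β)) - 2*β*τ^β*(1+τ^(1-β))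
        + 2*(1-β)*τ^(1-β)*(1-τ^β))) / (2*τ*(1-τ^β)*(1+τ^(1-β)))^2

lemma den_pos {β τ : ℝ} (hβ0 : 0 < β) (hβ1 : β < 1) (hτ0 : 0 < τ) (hτ1 : τ < 1) :
    0 < 2*τ*(1-τ^β)*(1+τ^(1-β)) := by
  have h1 : τ^β < 1 := Real.rpow_lt_one hτ0.le hτ1 hβ0
  have h2 : (0:ℝ) < τ^(1-β) := Real.rpow_pos_of_pos hτ0 _
  have h3 : (0:ℝ) < 1 - τ^β := by linarith
  positivity

lemma hasDerivAt_hcl {β τ : ℝ} (hβ0 : 0 < β) (hβ1 : β < 1) (hτ0 : 0 < τ) (hτ1 : τ < 1) :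
    HasDerivAt (hcl β) (hclD β τ) τ := by
  have hτne : τ ≠ 0 := hτ0.ne'
  have hid : HasDerivAt (fun τ : ℝ => τ) 1 τ := hasDerivAt_id τ
  have hub : HasDerivAt (fun τ : ℝ => τ^β) (β*τ^(β-1)) τ :=
    Real.hasDerivAt_rpow_const (Or.inl hτne)
  have hvb : HasDerivAt (fun τ : ℝ => τ^(1-β)) ((1-β)*τ^(1-β-1)) τ :=
    Real.hasDerivAt_rpow_const (Or.inl hτne)
  have h1τ : HasDerivAt (fun τ : ℝ => 1 - τ) (-1) τ := by
    simpa using hid.const_sub 1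
  have h2τ : HasDerivAt (fun τ : ℝ => (1+τ)^2) ((2:ℕ) * (1+τ)^(2-1) * 1) τ :=
    (hid.const_add 1).pow 2
  have hnum : HasDerivAt (fun τ : ℝ => β*(1-τ)*(1+τ)^2) (β*(1+τ)*(1-3*τ)) τ := by
    have h := (h1τ.const_mul β).fun_mul h2τ
    refine h.congr_deriv ?_
    push_cast
    ring
  have e1 : τ * (β * τ^(β-1)) = β * τ^β := by
    rw [Real.rpow_sub_one hτne]; field_simp
  have e2 : τ * ((1-β) * τ^(1-β-1)) = (1-β) * τ^(1-β) := by
    rw [Real.rpow_sub_one hτne]; field_simp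
  have hden : HasDerivAt (fun τ : ℝ => 2*τ*(1-τ^β)*(1+τ^(1-β)))
      (2*(1-τ^β)*(1+τ^(1-β)) - 2*β*τ^β*(1+τ^(1-β)) + 2*(1-β)*τ^(1-β)*(1-τ^β)) τ := by
    have hu' : HasDerivAt (fun τ : ℝ => 1 - τ^β) (-(β*τ^(β-1))) τ := hub.const_sub 1
    have hv' : HasDerivAt (fun τ : ℝ => 1 + τ^(1-β)) ((1-β)*τ^(1-β-1)) τ := hvb.const_add 1
    have h := ((hid.const_mul 2).fun_mul hu').fun_mul hv'
    refine h.congr_deriv ?_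
    linear_combination (2*(1-τ^β)) * e2 - (2*(1+τ^(1-β))) * e1
  have hne : 2*τ*(1-τ^β)*(1+τ^(1-β)) ≠ 0 := (den_pos hβ0 hβ1 hτ0 hτ1).ne'
  exact hnum.div hden hne

lemma hclD_nonpos {β τ : ℝ} (hβ0 : 0 < β) (hβ1 : β < 1) (hτ0 : 0 < τ) (hτ1 : τ < 1) :
    hclD β τ ≤ 0 := by
  set u := τ^β with hu
  set v := τ^(1-β) with hv
  have hu1 : u < 1 := Real.rpow_lt_one hτ0.le hτ1 hβ0
  have hu0 : 0 < u := Real.rpow_pos_of_pos hτ0 _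
  have hv0 : 0 < v := Real.rpow_pos_of_pos hτ0 _
  have h1u : (0:ℝ) < 1 - u := by linarith
  have h1v : (0:ℝ) < 1 + v := by linarith
  have hττ : (0:ℝ) < 1 - τ*τ := by nlinarith
  have hS := star3 hβ0 hβ1 hτ0 hτ1
  rw [← hu, ← hv] at hS
  -- key inequality
  have hfac : (1-τ)*(1+τ)*((1-u)*(1+v) - β*u*(1+v) + (1-β)*v*(1-u))
      = (1-τ*τ)*((1-u)*(1+v))*(1 - (β*u/(1-u) - (1-β)*v/(1+v))) := by
    field_simp
    ring
  have hfac2 : (1-τ*τ)*((1-u)*(1+v))*(1 - (2*(τ*τ)-τ+1)/(1-τ*τ))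
      = τ*(1-3*τ)*((1-u)*(1+v)) := by
    have hd : (2*(τ*τ)-τ+1)/(1-τ*τ)*(1-τ*τ) = 2*(τ*τ)-τ+1 := div_mul_cancel₀ _ hττ.ne'
    linear_combination (-((1-u)*(1+v))) * hd
  have hmul : (1-τ*τ)*((1-u)*(1+v))*(1 - (2*(τ*τ)-τ+1)/(1-τ*τ))
      ≤ (1-τ*τ)*((1-u)*(1+v))*(1 - (β*u/(1-u) - (1-β)*v/(1+v))) := by
    apply mul_le_mul_of_nonneg_left (by linarith) (by positivity)
  have key : τ*(1-3*τ)*((1-u)*(1+v))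
      ≤ (1-τ)*(1+τ)*((1-u)*(1+v) - β*u*(1+v) + (1-β)*v*(1-u)) := by
    rw [hfac]; rw [hfac2] at hmul; exact hmul
  -- numerator factorization
  rw [hclD, ← hu, ← hv, div_nonpos_iff]
  right
  constructor
  · have hNfac : β*(1+τ)*(1-3*τ) * (2*τ*(1-u)*(1+v))
        - β*(1-τ)*(1+τ)^2 * (2*(1-u)*(1+v) - 2*β*u*(1+v) + 2*(1-β)*v*(1-u))
        = 2*β*(1+τ) * (τ*(1-3*τ)*((1-u)*(1+v))
            - (1-τ)*(1+τ)*((1-u)*(1+v) - β*u*(1+v) + (1-β)*v*(1-u))) := by ring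
    rw [hNfac]
    apply mul_nonpos_of_nonneg_of_nonpos (by positivity)
    linarith
  · positivity

lemma hcl_antitoneOn {β : ℝ} (hβ0 : 0 < β) (hβ1 : β < 1) :
    AntitoneOn (hcl β) (Ioo 0 1) := by
  apply antitoneOn_of_deriv_nonpos (convex_Ioo 0 1)
  · intro x hx
    exact (hasDerivAt_hcl hβ0 hβ1 hx.1 hx.2).continuousAt.continuousWithinAt
  · intro x hx
    rw [isOpen_Ioo.interior_eq] at hx
    exact (hasDerivAt_hcl hβ0 hβ1 hx.1 hx.2).differentiableAt.differentiableWithinAt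
  · intro x hx
    rw [isOpen_Ioo.interior_eq] at hx
    rw [(hasDerivAt_hcl hβ0 hβ1 hx.1 hx.2).deriv]
    exact hclD_nonpos hβ0 hβ1 hx.1 hx.2




noncomputable def Sf (α z : ℝ) : ℝ := (1/2) * (1+z)^α + (1/2) * (1-z)^α
noncomputable def Snd (α z : ℝ) : ℝ := α/2 * ((1-z)^(α-1) - (1+z)^(α-1))
noncomputable def Snd2 (α z : ℝ) : ℝ := α*(1-α)/2 * ((1-z)^(α-2) + (1+z)^(α-2))
noncomputable def psif (ρ z : ℝ) : ℝ :=
  ρ * (-(Snd (1/(1+ρ)) z)) / Sf (1/(1+ρ)) z + Snd2 (1/(1+ρ)) z / Snd (1/(1+ρ)) z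

lemma g_eq_Sf (ρ z : ℝ) : g ρ z = (Sf (1/(1+ρ)) z) ^ (1+ρ) := rfl

section Calc

lemma alpha_pos {ρ : ℝ} (hρ : 0 < ρ) : 0 < 1/(1+ρ) := by positivity
lemma alpha_lt_one {ρ : ℝ} (hρ : 0 < ρ) : 1/(1+ρ) < 1 := by
  rw [div_lt_one (by linarith)]; linarith

lemma Sf_pos' {α z : ℝ} (hz0 : -1 < z) (hz1 : z < 1) : 0 < Sf α z := by
  have h1 : (0:ℝ) < (1+z)^α := Real.rpow_pos_of_pos (by linarith) _
  have h2 : (0:ℝ) < (1-z)^α := Real.rpow_pos_of_pos (by linarith) _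
  rw [Sf]; positivity

lemma Snd_pos {ρ z : ℝ} (hρ : 0 < ρ) (hz0 : 0 < z) (hz1 : z < 1) :
    0 < Snd (1/(1+ρ)) z := by
  have hα0 := alpha_pos hρ
  have hα1 := alpha_lt_one hρ
  have hlt : (1+z)^(1/(1+ρ)-1) < (1-z)^(1/(1+ρ)-1) :=
    Real.rpow_lt_rpow_of_neg (by linarith) (by linarith) (by linarith)
  rw [Snd]
  have : (0:ℝ) < (1-z)^(1/(1+ρ)-1) - (1+z)^(1/(1+ρ)-1) := by linarith
  positivity

lemma hasDerivAt_Sf {α z : ℝ} (hz0 : -1 < z) (hz1 : z < 1) :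
    HasDerivAt (Sf α) (-(Snd α z)) z := by
  have hA : (1+z) ≠ 0 := by linarith
  have hB : (1-z) ≠ 0 := by intro h; nlinarith [h]
  have h1 : HasDerivAt (fun z : ℝ => (1+z)^α) (1 * α * (1+z)^(α-1)) z :=
    ((hasDerivAt_id z).const_add 1).rpow_const (Or.inl hA)
  have h2 : HasDerivAt (fun z : ℝ => (1-z)^α) ((-1) * α * (1-z)^(α-1)) z := by
    have hb : HasDerivAt (fun z : ℝ => 1 - z) (-1) z := by
      simpa using (hasDerivAt_id z).const_sub 1
    exact hb.rpow_const (Or.inl hB)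
  have h := (h1.const_mul ((1:ℝ)/2)).fun_add (h2.const_mul ((1:ℝ)/2))
  refine h.congr_deriv ?_
  rw [Snd]; ring

lemma hasDerivAt_Snd {α z : ℝ} (hz0 : -1 < z) (hz1 : z < 1) :
    HasDerivAt (Snd α) (Snd2 α z) z := by
  have hA : (1+z) ≠ 0 := by linarith
  have hB : (1-z) ≠ 0 := by intro h; nlinarith [h]
  have h1 : HasDerivAt (fun z : ℝ => (1-z)^(α-1)) ((-1) * (α-1) * (1-z)^(α-1-1)) z := by
    have hb : HasDerivAt (fun z : ℝ => 1 - z) (-1) z := by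
      simpa using (hasDerivAt_id z).const_sub 1
    exact hb.rpow_const (Or.inl hB)
  have h2 : HasDerivAt (fun z : ℝ => (1+z)^(α-1)) (1 * (α-1) * (1+z)^(α-1-1)) z :=
    ((hasDerivAt_id z).const_add 1).rpow_const (Or.inl hA)
  have h := (h1.fun_sub h2).const_mul (α/2)
  refine h.congr_deriv ?_
  rw [Snd2]
  rw [show α - 2 = α - 1 - 1 by ring]
  ring

lemma hasDerivAt_g' {ρ z : ℝ} (hz0 : -1 < z) (hz1 : z < 1) : HasDerivAt (g ρ)
    (-((1+ρ) * Sf (1/(1+ρ)) z ^ ρ * Snd (1/(1+ρ)) z)) z := by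
  have hSf := hasDerivAt_Sf (α := 1/(1+ρ)) hz0 hz1
  have hne : Sf (1/(1+ρ)) z ≠ 0 := (Sf_pos' (by linarith) hz1).ne'
  have h := hSf.rpow_const (p := 1+ρ) (Or.inl hne)
  have hg : g ρ = fun z => (Sf (1/(1+ρ)) z) ^ (1+ρ) := rfl
  rw [hg]
  convert h using 1
  rw [show (1:ℝ)+ρ-1 = ρ by ring]
  ring

noncomputable def Gneg (ρ z : ℝ) : ℝ := (1+ρ) * Sf (1/(1+ρ)) z ^ ρ * Snd (1/(1+ρ)) z

noncomputable def Nf (ρ z : ℝ) : ℝ :=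
  Real.log (1+ρ) + ρ * Real.log (Sf (1/(1+ρ)) z) + Real.log (Snd (1/(1+ρ)) z)

lemma Gneg_pos {ρ z : ℝ} (hρ : 0 < ρ) (hz0 : 0 < z) (hz1 : z < 1) : 0 < Gneg ρ z := by
  have h1 := Sf_pos' (α := 1/(1+ρ)) (z := z) (by linarith) hz1
  have h2 := Snd_pos hρ hz0 hz1
  have h3 : (0:ℝ) < Sf (1/(1+ρ)) z ^ ρ := Real.rpow_pos_of_pos h1 _
  rw [Gneg]; positivity

lemma exp_Nf {ρ z : ℝ} (hρ : 0 < ρ) (hz0 : 0 < z) (hz1 : z < 1) :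
    Real.exp (Nf ρ z) = Gneg ρ z := by
  have h1 := Sf_pos' (α := 1/(1+ρ)) (z := z) (by linarith) hz1
  have h2 := Snd_pos hρ hz0 hz1
  rw [Nf, Gneg, Real.exp_add, Real.exp_add, Real.exp_log (by linarith), Real.exp_log h2]
  congr 1
  congr 1
  rw [Real.rpow_def_of_pos h1, mul_comm]

lemma hasDerivAt_Nf {ρ z : ℝ} (hρ : 0 < ρ) (hz0 : 0 < z) (hz1 : z < 1) :
    HasDerivAt (Nf ρ) (psif ρ z) z := by
  have h1 := Sf_pos' (α := 1/(1+ρ)) (z := z) (by linarith) hz1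
  have h2 := Snd_pos hρ hz0 hz1
  have hSf := hasDerivAt_Sf (α := 1/(1+ρ)) (z := z) (by linarith) hz1
  have hSnd := hasDerivAt_Snd (α := 1/(1+ρ)) (z := z) (by linarith) hz1
  have hl1 : HasDerivAt (fun z => Real.log (Sf (1/(1+ρ)) z)) (-(Snd (1/(1+ρ)) z) / Sf (1/(1+ρ)) z) z :=
    hSf.log h1.ne'
  have hl2 : HasDerivAt (fun z => Real.log (Snd (1/(1+ρ)) z)) (Snd2 (1/(1+ρ)) z / Snd (1/(1+ρ)) z) z :=
    hSnd.log h2.ne'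
  have h := ((hl1.const_mul ρ).fun_add hl2).const_add (Real.log (1+ρ))
  have hNf : Nf ρ = fun z => Real.log (1+ρ) + (ρ * Real.log (Sf (1/(1+ρ)) z) + Real.log (Snd (1/(1+ρ)) z)) := by
    funext w; rw [Nf]; ring
  rw [hNf]
  refine h.congr_deriv ?_
  rw [psif]
  ring

private lemma alg_psi {α z P Q ρ : ℝ} (hz0 : 0 < z) (hz1 : z < 1)
    (hα0 : 0 < α) (hα1 : α < 1) (hP : 0 < P) (hQ : 0 < Q)
    (hAQBP : 0 < (1+z)*Q - (1-z)*P) (hρα : ρ * α = 1 - α) :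
    ρ * (-(α/2 * (Q/(1-z) - P/(1+z)))) / ((1/2)*P + (1/2)*Q)
      + α*(1-α)/2 * (Q/((1-z)*(1-z)) + P/((1+z)*(1+z))) / (α/2 * (Q/(1-z) - P/(1+z)))
    = 4*(1-α)*P*Q/(((1+z)*(1-z))*((1+z)*Q-(1-z)*P)*(P+Q)) := by
  have hρe : ρ = (1-α)/α := by
    rw [eq_div_iff hα0.ne']; linarith
  have hA : (0:ℝ) < 1 + z := by linarith
  have hB : (0:ℝ) < 1 - z := by linarith
  have hQP : (0:ℝ) < Q/(1-z) - P/(1+z) := by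
    rw [sub_pos, div_lt_div_iff₀ hA hB]; nlinarith
  rw [hρe]
  rw [div_add_div _ _ (by positivity) (by positivity : α/2 * (Q/(1-z) - P/(1+z)) ≠ 0)]
  rw [div_eq_div_iff (by positivity) (by positivity)]
  field_simp
  ring

private lemma alg_hcl {α z P Q : ℝ} (hz0 : 0 < z) (hz1 : z < 1)
    (hα0 : 0 < α) (hα1 : α < 1) (hP : 0 < P) (hQ : 0 < Q)
    (hAQBP : 0 < (1+z)*Q - (1-z)*P) :
    z * (4*(1-α)*P*Q/(((1+z)*(1-z))*((1+z)*Q-(1-z)*P)*(P+Q)))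
    = (1-α) * (1-(1-z)/(1+z)) * (1+(1-z)/(1+z))^2
        / (2*((1-z)/(1+z))*(1-((1-z)/(1+z))/(Q/P))*(1+Q/P)) := by
  have hA : (0:ℝ) < 1 + z := by linarith
  have hB : (0:ℝ) < 1 - z := by linarith
  have hτ0 : (0:ℝ) < (1-z)/(1+z) := by positivity
  have h1mτβ : (0:ℝ) < 1 - ((1-z)/(1+z))/(Q/P) := by
    rw [sub_pos, div_lt_one (by positivity), div_lt_div_iff₀ hA (by positivity)]
    nlinarith
  rw [← mul_div_assoc, div_eq_div_iff (by positivity) (by positivity)]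
  field_simp
  ring

/-- Bridge: `z * ψ(z) = hcl β τ(z)` with `β = ρ/(1+ρ)`, `τ = (1-z)/(1+z)`. -/
lemma zpsi_eq_hcl {ρ z : ℝ} (hρ : 0 < ρ) (hz0 : 0 < z) (hz1 : z < 1) :
    z * psif ρ z = hcl (ρ/(1+ρ)) ((1-z)/(1+z)) := by
  have hA : (0:ℝ) < 1 + z := by linarith
  have hB : (0:ℝ) < 1 - z := by linarith
  have hρ1 : (0:ℝ) < 1 + ρ := by linarith
  have hα0 : 0 < 1/(1+ρ) := alpha_pos hρ
  have hα1 : 1/(1+ρ) < 1 := alpha_lt_one hρ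
  have hP : (0:ℝ) < (1+z)^(1/(1+ρ)) := Real.rpow_pos_of_pos hA _
  have hQ : (0:ℝ) < (1-z)^(1/(1+ρ)) := Real.rpow_pos_of_pos hB _
  have hτ0 : (0:ℝ) < (1-z)/(1+z) := by positivity
  have hPm1 : (1+z)^(1/(1+ρ)-1) = (1+z)^(1/(1+ρ)) / (1+z) := Real.rpow_sub_one hA.ne' _
  have hQm1 : (1-z)^(1/(1+ρ)-1) = (1-z)^(1/(1+ρ)) / (1-z) := Real.rpow_sub_one hB.ne' _
  have hPm2 : (1+z)^(1/(1+ρ)-2) = (1+z)^(1/(1+ρ)) / ((1+z)*(1+z)) := by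
    rw [show 1/(1+ρ) - 2 = 1/(1+ρ) - 1 - 1 by ring, Real.rpow_sub_one hA.ne', hPm1, div_div]
  have hQm2 : (1-z)^(1/(1+ρ)-2) = (1-z)^(1/(1+ρ)) / ((1-z)*(1-z)) := by
    rw [show 1/(1+ρ) - 2 = 1/(1+ρ) - 1 - 1 by ring, Real.rpow_sub_one hB.ne', hQm1, div_div]
  have hAQBP : 0 < (1+z)*(1-z)^(1/(1+ρ)) - (1-z)*(1+z)^(1/(1+ρ)) := by
    have hlt : (1+z)^(1/(1+ρ)-1) < (1-z)^(1/(1+ρ)-1) :=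
      Real.rpow_lt_rpow_of_neg (by linarith) (by linarith) (by linarith)
    rw [hPm1, hQm1, div_lt_div_iff₀ hA hB] at hlt
    nlinarith
  have hταe : ((1-z)/(1+z)) ^ (1/(1+ρ)) = (1-z)^(1/(1+ρ)) / (1+z)^(1/(1+ρ)) :=
    Real.div_rpow hB.le hA.le _
  have hτβ : ((1-z)/(1+z)) ^ (ρ/(1+ρ))
      = ((1-z)/(1+z)) / ((1-z)^(1/(1+ρ)) / (1+z)^(1/(1+ρ))) := by
    rw [show ρ/(1+ρ) = 1 - 1/(1+ρ) by field_simp; ring, Real.rpow_sub hτ0, Real.rpow_one, hταe]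
  have hτ1β : ((1-z)/(1+z)) ^ (1 - ρ/(1+ρ)) = (1-z)^(1/(1+ρ)) / (1+z)^(1/(1+ρ)) := by
    rw [show 1 - ρ/(1+ρ) = 1/(1+ρ) by field_simp; ring]
    exact hταe
  have hρα : ρ * (1/(1+ρ)) = 1 - 1/(1+ρ) := by field_simp; ring
  have psi_eq : psif ρ z
      = 4*(1-(1/(1+ρ)))*((1+z)^(1/(1+ρ)))*((1-z)^(1/(1+ρ)))
        /(((1+z)*(1-z))*((1+z)*((1-z)^(1/(1+ρ)))-(1-z)*((1+z)^(1/(1+ρ))))*((1+z)^(1/(1+ρ))+(1-z)^(1/(1+ρ)))) := by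
    rw [psif, Sf, Snd, Snd2, hPm1, hQm1, hPm2, hQm2]
    exact alg_psi hz0 hz1 hα0 hα1 hP hQ hAQBP hρα
  rw [psi_eq, hcl, hτβ, hτ1β,
    show ρ/(1+ρ) = 1 - 1/(1+ρ) by field_simp; ring]
  exact alg_hcl hz0 hz1 hα0 hα1 hP hQ hAQBP

/-- Monotonicity of `z ↦ z·ψ(z)` on `(0,1)`. -/
lemma zpsi_mono {ρ z1 z2 : ℝ} (hρ : 0 < ρ) (h01 : 0 < z1) (h12 : z1 ≤ z2) (h21 : z2 < 1) :
    z1 * psif ρ z1 ≤ z2 * psif ρ z2 := by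
  have hβ0 : 0 < ρ/(1+ρ) := by positivity
  have hβ1 : ρ/(1+ρ) < 1 := by rw [div_lt_one (by linarith)]; linarith
  have hz11 : z1 < 1 := lt_of_le_of_lt h12 h21
  have hz20 : 0 < z2 := lt_of_lt_of_le h01 h12
  rw [zpsi_eq_hcl hρ h01 hz11, zpsi_eq_hcl hρ hz20 h21]
  have hτ1 : (1-z1)/(1+z1) ∈ Ioo (0:ℝ) 1 := by
    constructor
    · exact div_pos (by linarith) (by linarith)
    · rw [div_lt_one (by linarith)]; linarith
  have hτ2 : (1-z2)/(1+z2) ∈ Ioo (0:ℝ) 1 := by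
    constructor
    · exact div_pos (by linarith) (by linarith)
    · rw [div_lt_one (by linarith)]; linarith
  have hle : (1-z2)/(1+z2) ≤ (1-z1)/(1+z1) := by
    rw [div_le_div_iff₀ (by linarith) (by linarith)]
    nlinarith
  exact hcl_antitoneOn hβ0 hβ1 hτ2 hτ1 hle

end Calc



lemma hasDerivAt_g'' {ρ z : ℝ} (hz0 : -1 < z) (hz1 : z < 1) :
    HasDerivAt (g ρ) (-(Gneg ρ z)) z := hasDerivAt_g' hz0 hz1

/-- continuity of `g ρ` (for `-1 ≤ ρ`). -/
lemma g_cont {ρ : ℝ} (hρ : 0 ≤ ρ) : Continuous (g ρ) := by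
  have hα : (0:ℝ) ≤ 1/(1+ρ) := by positivity
  have h1 : Continuous (fun z : ℝ => (1/2) * (1+z)^(1/(1+ρ)) + (1/2) * (1-z)^(1/(1+ρ))) := by
    apply Continuous.add
    · exact continuous_const.mul
        ((Real.continuous_rpow_const hα).comp (continuous_const.add continuous_id))
    · exact continuous_const.mul
        ((Real.continuous_rpow_const hα).comp (continuous_const.sub continuous_id))
  exact (Real.continuous_rpow_const (by linarith : (0:ℝ) ≤ 1+ρ)).comp h1

/-- `R` is antitone: for `0 < Δ₁ ≤ Δ₂ < 1`,
`δ·Gneg(δΔ₂)/Gneg(Δ₂) ≤ δ·Gneg(δΔ₁)/Gneg(Δ₁)`. -/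
lemma R_antitone {ρ δ Δ1 Δ2 : ℝ} (hρ : 0 < ρ) (hδ0 : 0 < δ) (hδ1 : δ < 1)
    (h1 : 0 < Δ1) (h12 : Δ1 ≤ Δ2) (h2 : Δ2 < 1) :
    δ * Gneg ρ (δ*Δ2) / Gneg ρ Δ2 ≤ δ * Gneg ρ (δ*Δ1) / Gneg ρ Δ1 := by
  set Lf : ℝ → ℝ := fun Δ => Real.log δ + Nf ρ (δ*Δ) - Nf ρ Δ with hLf
  have hder : ∀ Δ : ℝ, 0 < Δ → Δ < 1 → HasDerivAt Lf (psif ρ (δ*Δ) * δ - psif ρ Δ) Δ := by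
    intro Δ hΔ0 hΔ1
    have hδΔ0 : 0 < δ*Δ := mul_pos hδ0 hΔ0
    have hδΔ1 : δ*Δ < 1 := by nlinarith
    have hi : HasDerivAt (fun t : ℝ => δ*t) δ Δ := by
      simpa using (hasDerivAt_id Δ).const_mul δ
    have hcomp : HasDerivAt (fun Δ : ℝ => Nf ρ (δ*Δ)) (psif ρ (δ*Δ) * δ) Δ :=
      HasDerivAt.comp Δ (hasDerivAt_Nf hρ hδΔ0 hδΔ1) hi
    exact (hcomp.const_add (Real.log δ)).sub (hasDerivAt_Nf hρ hΔ0 hΔ1)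
  have hanti : AntitoneOn Lf (Ioo 0 1) := by
    apply antitoneOn_of_deriv_nonpos (convex_Ioo 0 1)
    · intro x hx
      exact (hder x hx.1 hx.2).continuousAt.continuousWithinAt
    · intro x hx
      rw [isOpen_Ioo.interior_eq] at hx
      exact (hder x hx.1 hx.2).differentiableAt.differentiableWithinAt
    · intro x hx
      rw [isOpen_Ioo.interior_eq] at hx
      rw [(hder x hx.1 hx.2).deriv]
      have hkey := zpsi_mono hρ (mul_pos hδ0 hx.1)
        (by nlinarith [mul_pos hx.1 (by linarith : (0:ℝ) < 1-δ)] : δ*x ≤ x) hx.2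
      have : psif ρ (δ*x) * δ ≤ psif ρ x := by
        rw [← mul_le_mul_iff_right₀ hx.1]
        calc x * (psif ρ (δ*x) * δ) = (δ*x) * psif ρ (δ*x) := by ring
        _ ≤ x * psif ρ x := hkey
      linarith
  have hLle := hanti (mem_Ioo.mpr ⟨h1, lt_of_le_of_lt h12 h2⟩) (mem_Ioo.mpr ⟨lt_of_lt_of_le h1 h12, h2⟩) h12
  -- exponentiate
  have hexp : ∀ Δ : ℝ, 0 < Δ → Δ < 1 → Real.exp (Lf Δ) = δ * Gneg ρ (δ*Δ) / Gneg ρ Δ := by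
    intro Δ hΔ0 hΔ1
    have hδΔ0 : 0 < δ*Δ := mul_pos hδ0 hΔ0
    have hδΔ1 : δ*Δ < 1 := by nlinarith
    simp only [hLf]
    rw [sub_eq_add_neg, Real.exp_add, Real.exp_add, Real.exp_log hδ0,
      exp_Nf hρ hδΔ0 hδΔ1, Real.exp_neg, exp_Nf hρ hΔ0 hΔ1]
    rw [div_eq_mul_inv, mul_assoc]
  rw [← hexp Δ1 h1 (lt_of_le_of_lt h12 h2), ← hexp Δ2 (lt_of_lt_of_le h1 h12) h2]
  exact Real.exp_le_exp.mpr hLle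

/-- Tangent-line lemma: for fixed `δ, z ∈ (0,1)`, the function
`Δ ↦ g(δΔ) - c·g(Δ)` with `c = δ g'(δz)/g'(z)` is minimized on `[0,1]` at `z`. -/
lemma tangent {ρ δ z : ℝ} (hρ : 0 < ρ) (hδ0 : 0 < δ) (hδ1 : δ < 1)
    (hz0 : 0 < z) (hz1 : z < 1) {Δ : ℝ} (hΔ : Δ ∈ Icc (0:ℝ) 1) :
    g ρ (δ*z) - (δ * Gneg ρ (δ*z) / Gneg ρ z) * g ρ z
      ≤ g ρ (δ*Δ) - (δ * Gneg ρ (δ*z) / Gneg ρ z) * g ρ Δ := by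
  set c : ℝ := δ * Gneg ρ (δ*z) / Gneg ρ z with hc
  set F : ℝ → ℝ := fun Δ => g ρ (δ*Δ) - c * g ρ Δ with hF
  have hcont : Continuous F := by
    have := g_cont (ρ := ρ) hρ.le
    exact (this.comp (continuous_const.mul continuous_id)).sub (continuous_const.mul this)
  have hder : ∀ x : ℝ, -1 < x → x < 1 →
      HasDerivAt F (-(Gneg ρ (δ*x)) * δ - c * (-(Gneg ρ x))) x := by
    intro x hx0 hx1
    have hδx0 : -1 < δ*x := by nlinarith
    have hδx1 : δ*x < 1 := by nlinarith
    have hi : HasDerivAt (fun t : ℝ => δ*t) δ x := by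
      simpa using (hasDerivAt_id x).const_mul δ
    have h1 : HasDerivAt (fun x : ℝ => g ρ (δ*x)) (-(Gneg ρ (δ*x)) * δ) x :=
      HasDerivAt.comp x (hasDerivAt_g'' hδx0 hδx1) hi
    exact h1.sub ((hasDerivAt_g'' hx0 hx1).const_mul c)
  have hcz : c = δ * Gneg ρ (δ*z) / Gneg ρ z := rfl
  -- F is antitone on [0, z]
  have hFanti : AntitoneOn F (Icc 0 z) := by
    apply antitoneOn_of_deriv_nonpos (convex_Icc 0 z) hcont.continuousOn
    · intro x hx
      rw [interior_Icc] at hx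
      exact (hder x (by linarith [hx.1]) (by linarith [hx.2])).differentiableAt.differentiableWithinAt
    · intro x hx
      rw [interior_Icc] at hx
      rw [(hder x (by linarith [hx.1]) (by linarith [hx.2])).deriv]
      have hRx := R_antitone hρ hδ0 hδ1 hx.1 hx.2.le hz1
      have hGx : 0 < Gneg ρ x := Gneg_pos hρ hx.1 (by linarith [hx.2])
      -- need: -(Gneg ρ (δ*x)) * δ - c * (-(Gneg ρ x)) ≤ 0
      rw [hcz]
      have h2 : (δ * Gneg ρ (δ*x) / Gneg ρ x) * Gneg ρ x = δ * Gneg ρ (δ*x) := by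
        field_simp
      nlinarith [mul_le_mul_of_nonneg_right hRx hGx.le]
  -- F is monotone on [z, 1]
  have hFmono : MonotoneOn F (Icc z 1) := by
    apply monotoneOn_of_deriv_nonneg (convex_Icc z 1) hcont.continuousOn
    · intro x hx
      rw [interior_Icc] at hx
      exact (hder x (by linarith [hx.1]) (by linarith [hx.2])).differentiableAt.differentiableWithinAt
    · intro x hx
      rw [interior_Icc] at hx
      rw [(hder x (by linarith [hx.1]) (by linarith [hx.2])).deriv]
      have hRx := R_antitone hρ hδ0 hδ1 hz0 hx.1.le hx.2
      have hGx : 0 < Gneg ρ x := Gneg_pos hρ (by linarith [hx.1]) hx.2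
      rw [hcz]
      have h2 : (δ * Gneg ρ (δ*z) / Gneg ρ z) * Gneg ρ x ≥ δ * Gneg ρ (δ*x) := by
        have := mul_le_mul_of_nonneg_right hRx hGx.le
        have h3 : (δ * Gneg ρ (δ*x) / Gneg ρ x) * Gneg ρ x = δ * Gneg ρ (δ*x) := by
          field_simp
        linarith [h3 ▸ this]
      nlinarith
  rcases le_total Δ z with h | h
  · exact hFanti (mem_Icc.mpr ⟨hΔ.1, h⟩) (mem_Icc.mpr ⟨hΔ.1.trans h, le_refl z⟩) h
  · exact hFmono (mem_Icc.mpr ⟨le_refl z, hz1.le⟩) (mem_Icc.mpr ⟨h, hΔ.2⟩) h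




lemma g_even (ρ z : ℝ) : g ρ (-z) = g ρ z := by
  rw [g, g, show (1:ℝ) + -z = 1 - z by ring, show (1:ℝ) - -z = 1 + z by ring, add_comm]

lemma g_zero {ρ : ℝ} : g ρ 0 = 1 := by
  rw [g]
  norm_num

lemma g_abs (ρ z : ℝ) : g ρ |z| = g ρ z := by
  rcases abs_cases z with ⟨h, _⟩ | ⟨h, _⟩
  · rw [h]
  · rw [h, g_even]

lemma g_pos {ρ z : ℝ} (hρ : 0 ≤ ρ) (hz : z ∈ Icc (-1:ℝ) 1) : 0 < g ρ z := by
  have hα : (0:ℝ) ≤ 1/(1+ρ) := by positivity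
  have hS : 0 < (1/2) * (1 + z) ^ (1/(1+ρ)) + (1/2) * (1 - z) ^ (1/(1+ρ)) := by
    rcases le_total 0 z with h | h
    · have h1 : (1:ℝ) ≤ (1+z)^(1/(1+ρ)) := by
        have := Real.rpow_le_rpow zero_le_one (by linarith : (1:ℝ) ≤ 1+z) hα
        rwa [Real.one_rpow] at this
      have h2 : (0:ℝ) ≤ (1-z)^(1/(1+ρ)) := Real.rpow_nonneg (by linarith [hz.2]) _
      linarith
    · have h1 : (1:ℝ) ≤ (1-z)^(1/(1+ρ)) := by
        have := Real.rpow_le_rpow zero_le_one (by linarith : (1:ℝ) ≤ 1-z) hα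
        rwa [Real.one_rpow] at this
      have h2 : (0:ℝ) ≤ (1+z)^(1/(1+ρ)) := Real.rpow_nonneg (by linarith [hz.1]) _
      linarith
  rw [g]
  exact Real.rpow_pos_of_pos hS _

lemma g_le_one {ρ z : ℝ} (hρ : 0 ≤ ρ) (hz : z ∈ Icc (-1:ℝ) 1) : g ρ z ≤ 1 := by
  have hα0 : (0:ℝ) ≤ 1/(1+ρ) := by positivity
  have hα1 : 1/(1+ρ) ≤ 1 := by
    rw [div_le_one (by linarith)]; linarith
  have hcc := Real.concaveOn_rpow hα0 hα1
  have h1z : (1+z) ∈ Ici (0:ℝ) := by simp; linarith [hz.1]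
  have h2z : (1-z) ∈ Ici (0:ℝ) := by simp; linarith [hz.2]
  have hkey := hcc.2 h1z h2z (by norm_num : (0:ℝ) ≤ 1/2) (by norm_num : (0:ℝ) ≤ 1/2)
    (by norm_num)
  simp only [smul_eq_mul] at hkey
  have he : (1/2) * (1+z) + (1/2) * (1-z) = 1 := by ring
  rw [he, Real.one_rpow] at hkey
  have hS : (1/2) * (1 + z) ^ (1/(1+ρ)) + (1/2) * (1 - z) ^ (1/(1+ρ)) ≤ 1 := hkey
  have hSnn : (0:ℝ) ≤ (1/2) * (1 + z) ^ (1/(1+ρ)) + (1/2) * (1 - z) ^ (1/(1+ρ)) := by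
    have := Real.rpow_nonneg (by linarith [hz.1] : (0:ℝ) ≤ 1+z) (1/(1+ρ))
    have := Real.rpow_nonneg (by linarith [hz.2] : (0:ℝ) ≤ 1-z) (1/(1+ρ))
    linarith
  rw [g]
  exact Real.rpow_le_one hSnn hS (by linarith)

lemma g_strictAntiOn {ρ : ℝ} (hρ : 0 < ρ) : StrictAntiOn (g ρ) (Icc 0 1) := by
  apply strictAntiOn_of_deriv_neg (convex_Icc 0 1) (g_cont hρ.le).continuousOn
  intro x hx
  rw [interior_Icc] at hx
  rw [(hasDerivAt_g'' (by linarith [hx.1]) hx.2).deriv]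
  have := Gneg_pos hρ hx.1 hx.2
  linarith

lemma g_antitoneOn {ρ : ℝ} (hρ : 0 < ρ) : AntitoneOn (g ρ) (Icc 0 1) :=
  (g_strictAntiOn hρ).antitoneOn

/-- Jensen-type inequality for `g`. -/
lemma jensen {ι : Type*} [Fintype ι] {ρ : ℝ} (hρ : 0 < ρ) (q Δf : ι → ℝ)
    (hq0 : ∀ i, 0 ≤ q i) (hq1 : ∑ i, q i = 1) (hΔ : ∀ i, Δf i ∈ Icc (0:ℝ) 1)
    {δ zz : ℝ} (hδ : δ ∈ Icc (0:ℝ) 1) (hz : zz ∈ Icc (0:ℝ) 1)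
    (hm : ∑ i, q i * g ρ (Δf i) = g ρ zz) :
    g ρ (δ * zz) ≤ ∑ i, q i * g ρ (δ * Δf i) := by
  have hmem : ∀ {w : ℝ}, w ∈ Icc (0:ℝ) 1 → w ∈ Icc (-1:ℝ) 1 :=
    fun hw => ⟨by linarith [hw.1], hw.2⟩
  have hδΔ : ∀ i, δ * Δf i ∈ Icc (0:ℝ) 1 := by
    intro i
    constructor
    · exact mul_nonneg hδ.1 (hΔ i).1
    · calc δ * Δf i ≤ 1 * 1 := by
            apply mul_le_mul hδ.2 (hΔ i).2 (hΔ i).1 (by norm_num)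
      _ = 1 := by norm_num
  rcases eq_or_lt_of_le hδ.1 with hδ0 | hδ0
  · -- δ = 0
    rw [← hδ0, zero_mul, g_zero]
    have : ∀ i, q i * g ρ ((0:ℝ) * Δf i) = q i := by
      intro i; rw [zero_mul, g_zero, mul_one]
    rw [Finset.sum_congr rfl (fun i _ => this i), hq1]
  rcases eq_or_lt_of_le hδ.2 with hδ1 | hδ1
  · -- δ = 1
    rw [hδ1, one_mul]
    have : ∀ i, q i * g ρ ((1:ℝ) * Δf i) = q i * g ρ (Δf i) := by
      intro i; rw [one_mul]
    rw [Finset.sum_congr rfl (fun i _ => this i), hm]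
  rcases eq_or_lt_of_le hz.1 with hz0 | hz0
  · -- zz = 0
    rw [← hz0, mul_zero, g_zero]
    have hstep : ∑ i, q i * g ρ (Δf i) ≤ ∑ i, q i * g ρ (δ * Δf i) := by
      apply Finset.sum_le_sum
      intro i _
      apply mul_le_mul_of_nonneg_left ?_ (hq0 i)
      apply g_antitoneOn hρ (hδΔ i) (hΔ i)
      calc δ * Δf i ≤ 1 * Δf i := mul_le_mul_of_nonneg_right hδ1.le (hΔ i).1
      _ = Δf i := one_mul _
    rw [hm, ← hz0, g_zero] at hstep
    exact hstep
  rcases eq_or_lt_of_le hz.2 with hz1 | hz1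
  · -- zz = 1
    rw [hz1, mul_one]
    have : ∀ i, q i * g ρ δ ≤ q i * g ρ (δ * Δf i) := by
      intro i
      apply mul_le_mul_of_nonneg_left ?_ (hq0 i)
      apply g_antitoneOn hρ (hδΔ i) ⟨hδ.1, hδ.2⟩
      calc δ * Δf i ≤ δ * 1 := mul_le_mul_of_nonneg_left (hΔ i).2 hδ.1
      _ = δ := mul_one δ
    calc g ρ δ = (∑ i, q i) * g ρ δ := by rw [hq1, one_mul]
    _ = ∑ i, q i * g ρ δ := by rw [Finset.sum_mul]
    _ ≤ ∑ i, q i * g ρ (δ * Δf i) := Finset.sum_le_sum (fun i _ => this i)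
  -- main case: 0 < δ < 1, 0 < zz < 1
  set c : ℝ := δ * Gneg ρ (δ*zz) / Gneg ρ zz with hc
  have key : ∀ i, q i * (g ρ (δ*zz) - c * g ρ zz) ≤ q i * (g ρ (δ*Δf i) - c * g ρ (Δf i)) :=
    fun i => mul_le_mul_of_nonneg_left (tangent hρ hδ0 hδ1 hz0 hz1 (hΔ i)) (hq0 i)
  have hsum := Finset.sum_le_sum (fun i (_ : i ∈ Finset.univ) => key i)
  have hL : ∑ i, q i * (g ρ (δ*zz) - c * g ρ zz) = g ρ (δ*zz) - c * g ρ zz := by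
    rw [← Finset.sum_mul, hq1, one_mul]
  have hR : ∑ i, q i * (g ρ (δ*Δf i) - c * g ρ (Δf i))
      = (∑ i, q i * g ρ (δ*Δf i)) - c * (∑ i, q i * g ρ (Δf i)) := by
    rw [Finset.mul_sum, ← Finset.sum_sub_distrib]
    apply Finset.sum_congr rfl
    intro i _
    ring
  rw [hL, hR, hm] at hsum
  linarith




lemma term_eq {ρ w0 w1 : ℝ} (hρ : 0 ≤ ρ) (h0 : 0 ≤ w0) (h1 : 0 ≤ w1) (hs : 0 < w0 + w1) :
    ((1/2) * w0 ^ (1/(1+ρ)) + (1/2) * w1 ^ (1/(1+ρ)))^(1+ρ)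
      = ((w0+w1)/2) * g ρ ((w0-w1)/(w0+w1)) := by
  have hρ1 : (0:ℝ) < 1 + ρ := by linarith
  set qq : ℝ := (w0+w1)/2 with hqq
  set d : ℝ := (w0-w1)/(w0+w1) with hd
  have hqq0 : 0 < qq := by rw [hqq]; positivity
  have h1d : 1 + d = 2*w0/(w0+w1) := by rw [hd]; field_simp; ring
  have h1m : 1 - d = 2*w1/(w0+w1) := by rw [hd]; field_simp; ring
  have h1d0 : 0 ≤ 1 + d := by rw [h1d]; positivity
  have h1m0 : 0 ≤ 1 - d := by rw [h1m]; positivity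
  have hw0 : w0 = qq*(1+d) := by rw [h1d, hqq]; field_simp
  have hw1 : w1 = qq*(1-d) := by rw [h1m, hqq]; field_simp
  rw [g]
  rw [hw0, hw1, Real.mul_rpow hqq0.le h1d0, Real.mul_rpow hqq0.le h1m0]
  have hfac : (1/2) * (qq^(1/(1+ρ)) * (1+d)^(1/(1+ρ))) + (1/2) * (qq^(1/(1+ρ)) * (1-d)^(1/(1+ρ)))
      = qq^(1/(1+ρ)) * ((1/2) * (1+d)^(1/(1+ρ)) + (1/2) * (1-d)^(1/(1+ρ))) := by ring
  rw [hfac]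
  have hinner0 : 0 ≤ (1/2) * (1+d)^(1/(1+ρ)) + (1/2) * (1-d)^(1/(1+ρ)) := by
    have := Real.rpow_nonneg h1d0 (1/(1+ρ))
    have := Real.rpow_nonneg h1m0 (1/(1+ρ))
    linarith
  rw [Real.mul_rpow (Real.rpow_nonneg hqq0.le _) hinner0]
  congr 1
  rw [← Real.rpow_mul hqq0.le, one_div, inv_mul_cancel₀ hρ1.ne', Real.rpow_one]

lemma ΔW_mem {Y : Type*} (W : Bool → Y → ℝ) (hW : ∀ x y, 0 ≤ W x y)
    (hWp : ∀ y, 0 < W false y + W true y) (y : Y) : ΔW W y ∈ Icc (-1:ℝ) 1 := by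
  have h := hWp y
  have h0 := hW false y
  have h1 := hW true y
  constructor
  · rw [ΔW, le_div_iff₀ h]; linarith
  · rw [ΔW, div_le_one h]; linarith

lemma expE0_eq {Y : Type*} [Fintype Y] [Nonempty Y] {ρ : ℝ} (hρ : 0 ≤ ρ)
    (W : Bool → Y → ℝ) (hW : ∀ x y, 0 ≤ W x y) (hWp : ∀ y, 0 < W false y + W true y) :
    Real.exp (-(E0 ρ W)) = ∑ y, qW W y * g ρ (ΔW W y) := by
  have hterm : ∀ y : Y, ((1/2) * (W false y) ^ (1/(1+ρ)) + (1/2) * (W true y) ^ (1/(1+ρ)))^(1+ρ)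
      = qW W y * g ρ (ΔW W y) := by
    intro y
    rw [term_eq hρ (hW false y) (hW true y) (hWp y)]
    rfl
  rw [E0, neg_neg]
  rw [Finset.sum_congr rfl (fun y _ => hterm y)]
  apply Real.exp_log
  apply Finset.sum_pos ?_ Finset.univ_nonempty
  intro y _
  exact mul_pos (by have := hWp y; rw [qW]; linarith)
    (g_pos hρ (ΔW_mem W hW hWp y))

section Minus
variable {Y1 Y2 : Type*} (W1 : Bool → Y1 → ℝ) (W2 : Bool → Y2 → ℝ)

lemma Wminus_false (p : Y1 × Y2) : Wminus W1 W2 false p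
    = (1/2) * W1 true p.1 * W2 true p.2 + (1/2) * W1 false p.1 * W2 false p.2 := by
  rw [Wminus, Fintype.sum_bool]
  norm_num

lemma Wminus_true (p : Y1 × Y2) : Wminus W1 W2 true p
    = (1/2) * W1 false p.1 * W2 true p.2 + (1/2) * W1 true p.1 * W2 false p.2 := by
  rw [Wminus, Fintype.sum_bool]
  norm_num

lemma Wminus_nonneg (hW1 : ∀ x y, 0 ≤ W1 x y) (hW2 : ∀ x y, 0 ≤ W2 x y) :
    ∀ x p, 0 ≤ Wminus W1 W2 x p := by
  intro x p
  cases x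
  · rw [Wminus_false]
    have := hW1 true p.1; have := hW1 false p.1
    have := hW2 true p.2; have := hW2 false p.2
    positivity
  · rw [Wminus_true]
    have := hW1 true p.1; have := hW1 false p.1
    have := hW2 true p.2; have := hW2 false p.2
    positivity

lemma Wminus_sum_pos (hW1p : ∀ y, 0 < W1 false y + W1 true y)
    (hW2p : ∀ y, 0 < W2 false y + W2 true y) (hW1 : ∀ x y, 0 ≤ W1 x y)
    (hW2 : ∀ x y, 0 ≤ W2 x y) :
    ∀ p, 0 < Wminus W1 W2 false p + Wminus W1 W2 true p := by
  intro p
  rw [Wminus_false, Wminus_true]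
  have h := mul_pos (hW1p p.1) (hW2p p.2)
  nlinarith [h]

lemma qW_Wminus (p : Y1 × Y2) : qW (Wminus W1 W2) p = qW W1 p.1 * qW W2 p.2 := by
  rw [qW, qW, qW, Wminus_false, Wminus_true]
  ring

lemma ΔW_Wminus (hW1p : ∀ y, 0 < W1 false y + W1 true y)
    (hW2p : ∀ y, 0 < W2 false y + W2 true y) (p : Y1 × Y2) :
    ΔW (Wminus W1 W2) p = ΔW W1 p.1 * ΔW W2 p.2 := by
  have h1 := hW1p p.1
  have h2 := hW2p p.2
  rw [ΔW, ΔW, ΔW, Wminus_false, Wminus_true]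
  rw [div_mul_div_comm, div_eq_div_iff (by nlinarith [mul_pos h1 h2]) (by positivity)]
  ring

end Minus


end PolarAux

open PolarAux in
theorem minus_BSC_extremal {Y1 Y2 : Type*} [Fintype Y1] [Fintype Y2]
    (W1 : Bool → Y1 → ℝ) (W2 : Bool → Y2 → ℝ)
    (hW1_nonneg : ∀ x y, 0 ≤ W1 x y) (hW1_sum : ∀ x, ∑ y, W1 x y = 1)
    (hW1_pos : ∀ y, 0 < W1 false y + W1 true y)
    (hW2_nonneg : ∀ x y, 0 ≤ W2 x y) (hW2_sum : ∀ x, ∑ y, W2 x y = 1)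
    (hW2_pos : ∀ y, 0 < W2 false y + W2 true y)
    (ρ : ℝ) (hρ : 0 ≤ ρ)
    (z1 z2 : ℝ) (hz1 : z1 ∈ Set.Icc (0:ℝ) 1) (hz2 : z2 ∈ Set.Icc (0:ℝ) 1)
    (hmatch1 : g ρ z1 = Real.exp (-(E0 ρ W1)))
    (hmatch2 : g ρ z2 = Real.exp (-(E0 ρ W2))) :
    g ρ (z1 * z2) ≤ Real.exp (-(E0 ρ (Wminus W1 W2))) := by
  -- nonemptiness
  have hNE1 : Nonempty Y1 := by
    rcases isEmpty_or_nonempty Y1 with h | h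
    · exfalso
      have h1 := hW1_sum false
      rw [Finset.univ_eq_empty, Finset.sum_empty] at h1
      norm_num at h1
    · exact h
  have hNE2 : Nonempty Y2 := by
    rcases isEmpty_or_nonempty Y2 with h | h
    · exfalso
      have h1 := hW2_sum false
      rw [Finset.univ_eq_empty, Finset.sum_empty] at h1
      norm_num at h1
    · exact h
  -- basic weight facts
  have hq1pos : ∀ y, 0 < qW W1 y := fun y => by
    have := hW1_pos y; rw [qW]; linarith
  have hq2pos : ∀ y, 0 < qW W2 y := fun y => by
    have := hW2_pos y; rw [qW]; linarith
  have hq1sum : ∑ y, qW W1 y = 1 := by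
    simp only [qW]
    rw [← Finset.sum_div, Finset.sum_add_distrib, hW1_sum false, hW1_sum true]
    norm_num
  have hq2sum : ∑ y, qW W2 y = 1 := by
    simp only [qW]
    rw [← Finset.sum_div, Finset.sum_add_distrib, hW2_sum false, hW2_sum true]
    norm_num
  have hWm_nonneg := Wminus_nonneg W1 W2 hW1_nonneg hW2_nonneg
  have hWm_pos := Wminus_sum_pos W1 W2 hW1_pos hW2_pos hW1_nonneg hW2_nonneg
  -- the E0 expansion for Wminus
  have hexp : Real.exp (-(E0 ρ (Wminus W1 W2)))
      = ∑ p : Y1 × Y2, qW (Wminus W1 W2) p * g ρ (ΔW (Wminus W1 W2) p) :=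
    expE0_eq hρ (Wminus W1 W2) hWm_nonneg hWm_pos
  have hptwise : ∀ p : Y1 × Y2, qW (Wminus W1 W2) p * g ρ (ΔW (Wminus W1 W2) p)
      = qW W1 p.1 * qW W2 p.2 * g ρ (|ΔW W1 p.1| * |ΔW W2 p.2|) := by
    intro p
    rw [qW_Wminus, ΔW_Wminus W1 W2 hW1_pos hW2_pos, ← abs_mul, g_abs]
  rw [hexp, Finset.sum_congr rfl (fun p _ => hptwise p), Fintype.sum_prod_type]
  -- now case on ρ
  rcases eq_or_lt_of_le hρ with hρ0 | hρpos
  · -- ρ = 0 : g 0 ≡ 1 and the sum is 1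
    have hg1 : ∀ w : ℝ, g ρ w = 1 := by
      intro w
      rw [g, ← hρ0]
      norm_num
      try ring
    rw [hg1]
    have hsum : ∀ y1, ∑ y2, qW W1 y1 * qW W2 y2 * g ρ (|ΔW W1 y1| * |ΔW W2 y2|)
        = qW W1 y1 := by
      intro y1
      rw [Finset.sum_congr rfl (fun y2 _ => by rw [hg1, mul_one]), ← Finset.mul_sum,
        hq2sum, mul_one]
    rw [Finset.sum_congr rfl (fun y1 _ => hsum y1), hq1sum]
  · -- ρ > 0
    have habs1 : ∀ y, |ΔW W1 y| ∈ Icc (0:ℝ) 1 := by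
      intro y
      have := ΔW_mem W1 hW1_nonneg hW1_pos y
      exact ⟨abs_nonneg _, abs_le.mpr ⟨this.1, this.2⟩⟩
    have habs2 : ∀ y, |ΔW W2 y| ∈ Icc (0:ℝ) 1 := by
      intro y
      have := ΔW_mem W2 hW2_nonneg hW2_pos y
      exact ⟨abs_nonneg _, abs_le.mpr ⟨this.1, this.2⟩⟩
    have hmatch1' : ∑ y, qW W1 y * g ρ (|ΔW W1 y|) = g ρ z1 := by
      rw [Finset.sum_congr rfl (fun y _ => by rw [g_abs])]
      rw [← expE0_eq hρ W1 hW1_nonneg hW1_pos]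
      exact hmatch1.symm
    have hmatch2' : ∑ y, qW W2 y * g ρ (|ΔW W2 y|) = g ρ z2 := by
      rw [Finset.sum_congr rfl (fun y _ => by rw [g_abs])]
      rw [← expE0_eq hρ W2 hW2_nonneg hW2_pos]
      exact hmatch2.symm
    -- inner Jensen
    have hinner : ∀ y1, qW W1 y1 * g ρ (|ΔW W1 y1| * z2)
        ≤ ∑ y2, qW W1 y1 * qW W2 y2 * g ρ (|ΔW W1 y1| * |ΔW W2 y2|) := by
      intro y1
      have hj := jensen hρpos (qW W2) (fun y2 => |ΔW W2 y2|)
        (fun y2 => (hq2pos y2).le) hq2sum habs2 (habs1 y1) hz2 hmatch2'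
      calc qW W1 y1 * g ρ (|ΔW W1 y1| * z2)
          ≤ qW W1 y1 * ∑ y2, qW W2 y2 * g ρ (|ΔW W1 y1| * |ΔW W2 y2|) :=
            mul_le_mul_of_nonneg_left hj (hq1pos y1).le
      _ = ∑ y2, qW W1 y1 * qW W2 y2 * g ρ (|ΔW W1 y1| * |ΔW W2 y2|) := by
            rw [Finset.mul_sum]
            exact Finset.sum_congr rfl (fun y2 _ => by ring)
    -- outer Jensen
    have houter : g ρ (z2 * z1) ≤ ∑ y1, qW W1 y1 * g ρ (z2 * |ΔW W1 y1|) :=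
      jensen hρpos (qW W1) (fun y1 => |ΔW W1 y1|)
        (fun y1 => (hq1pos y1).le) hq1sum habs1 hz2 hz1 hmatch1'
    calc g ρ (z1 * z2) = g ρ (z2 * z1) := by rw [mul_comm]
    _ ≤ ∑ y1, qW W1 y1 * g ρ (z2 * |ΔW W1 y1|) := houter
    _ = ∑ y1, qW W1 y1 * g ρ (|ΔW W1 y1| * z2) := by
        exact Finset.sum_congr rfl (fun y1 _ => by rw [mul_comm z2])
    _ ≤ ∑ y1, ∑ y2, qW W1 y1 * qW W2 y2 * g ρ (|ΔW W1 y1| * |ΔW W2 y2|) :=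
        Finset.sum_le_sum (fun y1 _ => hinner y1)
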